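/- For every positive integer n and real s > 0, the series ∑_{d≥1} r_d(n)/d^{1+s} converges and equals σ_{-s}(n)/ζ(1+s), where r_d(n) is the Ramanujan sum and σ_{-s}(n) = ∑_{e ∣ n} e^{-s}. -/

import Mathlib

open ArithmeticFunction Finset
open scoped ArithmeticFunction.Moebius ArithmeticFunction.zeta

/-- The Ramanujan sum `r_d(n) = ∑_{b mod d, gcd(b,d)=1} e(bn/d)`. -/
noncomputable def ramanujanSum (d n : ℕ) : ℂ :=
  ∑ b ∈ (Finset.range d).filter (fun b => Nat.gcd b d = 1),
    Complex.exp (2 * Real.pi * Complex.I * b * n / d)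

lemma aux_sum_moeb (m : ℕ) (hm : m ≠ 0) :
    ∑ e ∈ m.divisors, moebius e = if m = 1 then 1 else 0 := by
  have h := congrArg (fun f : ArithmeticFunction ℤ => f m) moebius_mul_coe_zeta
  simp only [mul_apply, one_apply] at h
  rw [Nat.sum_divisorsAntidiagonal (fun x y => μ x * ((ζ : ArithmeticFunction ℤ) y))] at h
  rw [← h]
  apply Finset.sum_congr rfl
  intro x hx
  rw [Nat.mem_divisors] at hx
  have hx0 : x ≠ 0 := fun h0 => hm (by simpa [h0] using hx.1)
  have hx2 : m / x ≠ 0 :=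
    Nat.div_ne_zero_iff.mpr ⟨hx0, Nat.le_of_dvd (Nat.pos_of_ne_zero hm) hx.1⟩
  rw [natCoe_apply, zeta_apply_ne hx2]
  simp

lemma aux_sum_exp_eq (d n : ℕ) (hd : d ≠ 0) :
    ∑ b ∈ Finset.range d, Complex.exp (2 * Real.pi * Complex.I * b * n / d) =
      if d ∣ n then (d : ℂ) else 0 := by
  have hd' : (d : ℂ) ≠ 0 := Nat.cast_ne_zero.mpr hd
  set z : ℂ := Complex.exp (2 * Real.pi * Complex.I * n / d) with hz
  have hterm : ∀ b : ℕ, Complex.exp (2 * Real.pi * Complex.I * b * n / d) = z ^ b := by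
    intro b
    rw [hz, ← Complex.exp_nat_mul]
    ring_nf
  have hzd : z ^ d = 1 := by
    rw [hz, ← Complex.exp_nat_mul]
    have h1 : (d : ℂ) * (2 * Real.pi * Complex.I * n / d) = (n : ℤ) * (2 * Real.pi * Complex.I) := by
      push_cast
      field_simp
    rw [h1, Complex.exp_int_mul_two_pi_mul_I]
  simp_rw [hterm]
  by_cases h : d ∣ n
  · obtain ⟨k, rfl⟩ := h
    have hz1 : z = 1 := by
      rw [hz]
      have h2 : 2 * Real.pi * Complex.I * ((d * k : ℕ) : ℂ) / d = (k : ℤ) * (2 * Real.pi * Complex.I) := by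
        push_cast
        field_simp
      rw [h2, Complex.exp_int_mul_two_pi_mul_I]
    simp [hz1]
  · have hz1 : z ≠ 1 := by
      intro hz1
      rw [hz, Complex.exp_eq_one_iff] at hz1
      obtain ⟨k, hk⟩ := hz1
      apply h
      have hpi : (2 * Real.pi * Complex.I : ℂ) ≠ 0 := by
        simp [Real.pi_ne_zero, Complex.I_ne_zero]
      have hk' : 2 * (Real.pi:ℂ) * Complex.I * n = (k:ℂ) * (2 * Real.pi * Complex.I) * d := by
        rw [div_eq_iff hd'] at hk
        exact hk
      have h2 : (n : ℂ) = ((k * d : ℤ) : ℂ) := by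
        push_cast
        apply mul_left_cancel₀ hpi
        linear_combination hk'
      have h3 : (n : ℤ) = k * d := by exact_mod_cast h2
      exact Int.natCast_dvd_natCast.mp ⟨k, by rw [h3, mul_comm]⟩
    rw [geom_sum_eq hz1, hzd, if_neg h]
    simp

lemma aux_ramanujanSum_eq (d n : ℕ) (hd : d ≠ 0) :
    ramanujanSum d n =
      ∑ e ∈ d.divisors, ((μ e : ℤ) : ℂ) * (if (d / e) ∣ n then ((d / e : ℕ) : ℂ) else 0) := by
  have step1 : ramanujanSum d n =
      ∑ b ∈ Finset.range d, ∑ e ∈ d.divisors,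
        (if e ∣ b then ((μ e : ℤ) : ℂ) else 0) * Complex.exp (2 * Real.pi * Complex.I * b * n / d) := by
    rw [ramanujanSum, Finset.sum_filter]
    apply Finset.sum_congr rfl
    intro b _
    rw [← Finset.sum_mul]
    have hgcd : Nat.gcd b d ≠ 0 := fun h0 => hd (Nat.eq_zero_of_gcd_eq_zero_right h0)
    have hset : d.divisors.filter (· ∣ b) = (Nat.gcd b d).divisors := by
      ext e
      simp only [Finset.mem_filter, Nat.mem_divisors, Nat.dvd_gcd_iff]
      tauto
    have hsum : ∑ e ∈ d.divisors, (if e ∣ b then ((μ e : ℤ) : ℂ) else 0)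
        = if Nat.gcd b d = 1 then 1 else 0 := by
      rw [← Finset.sum_filter, hset]
      have h2 := aux_sum_moeb (Nat.gcd b d) hgcd
      calc ∑ a ∈ (Nat.gcd b d).divisors, ((μ a : ℤ) : ℂ)
          = ((∑ a ∈ (Nat.gcd b d).divisors, μ a : ℤ) : ℂ) := by push_cast; rfl
        _ = _ := by rw [h2]; split <;> simp
    rw [hsum]
    split <;> simp
  rw [step1, Finset.sum_comm]
  apply Finset.sum_congr rfl
  intro e he
  obtain ⟨hedvd, _⟩ := Nat.mem_divisors.mp he
  have he0 : e ≠ 0 := fun h0 => hd (by simpa [h0] using hedvd)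
  obtain ⟨q, rfl⟩ := hedvd
  have hq0 : q ≠ 0 := fun h0 => hd (by simp [h0])
  have hq : (e * q) / e = q := Nat.mul_div_cancel_left q (Nat.pos_of_ne_zero he0)
  simp_rw [ite_mul, zero_mul, ← Finset.sum_filter, ← Finset.mul_sum, hq]
  congr 1
  rw [← aux_sum_exp_eq q n hq0]
  apply Finset.sum_nbij' (i := fun b => b / e) (j := fun c => e * c)
  · intro b hb
    simp only [Finset.mem_filter, Finset.mem_range] at hb
    simp only [Finset.mem_range]
    exact Nat.div_lt_of_lt_mul hb.1
  · intro c hc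
    simp only [Finset.mem_range] at hc
    simp only [Finset.mem_filter, Finset.mem_range]
    exact ⟨(Nat.mul_lt_mul_left (Nat.pos_of_ne_zero he0)).mpr hc, Dvd.intro c rfl⟩
  · intro b hb
    simp only [Finset.mem_filter] at hb
    exact Nat.mul_div_cancel' hb.2
  · intro c _
    exact Nat.mul_div_cancel_left c (Nat.pos_of_ne_zero he0)
  · intro b hb
    simp only [Finset.mem_filter] at hb
    obtain ⟨c, rfl⟩ := hb.2
    have hc : (e * c) / e = c := Nat.mul_div_cancel_left c (Nat.pos_of_ne_zero he0)
    rw [hc]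
    congr 1
    have he' : (e : ℂ) ≠ 0 := Nat.cast_ne_zero.mpr he0
    have hq' : (q : ℂ) ≠ 0 := Nat.cast_ne_zero.mpr hq0
    have heq' : ((e * q : ℕ) : ℂ) ≠ 0 := by push_cast; exact mul_ne_zero he' hq'
    rw [div_eq_div_iff heq' hq']
    push_cast
    ring

set_option maxHeartbeats 1000000 in
/-- For `n ≥ 1` and real `s > 0`, `∑_{d ≥ 1} r_d(n)/d^{1+s} = σ_{-s}(n)/ζ(1+s)`. -/
theorem stmt0 (n : ℕ) (hn : 0 < n) (s : ℝ) (hs : 0 < s) :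
    HasSum (fun d : ℕ => ramanujanSum (d + 1) n / ((d + 1 : ℂ) ^ ((1 : ℂ) + (s : ℂ))))
      ((∑ e ∈ n.divisors, (e : ℂ) ^ (-(s : ℂ))) / riemannZeta (1 + (s : ℂ))) := by
  have hn0 : n ≠ 0 := hn.ne'
  set c : ℂ := 1 + (s : ℂ) with hcdef
  have hc : 1 < c.re := by
    simp only [hcdef, Complex.add_re, Complex.one_re, Complex.ofReal_re]
    linarith
  have hζ0 : riemannZeta c ≠ 0 := riemannZeta_ne_zero_of_one_lt_re hc
  -- Möbius L-series
  have hμL : LSeries (fun k => ((μ k : ℤ) : ℂ)) c = (riemannZeta c)⁻¹ := by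
    have h1 := LSeries_zeta_mul_Lseries_moebius hc
    rw [LSeries_zeta_eq_riemannZeta hc] at h1
    field_simp
    linear_combination h1
  have hμsum : HasSum (fun m => LSeries.term (fun k => ((μ k : ℤ) : ℂ)) c m) ((riemannZeta c)⁻¹) := by
    rw [← hμL]
    exact (LSeriesSummable_moebius_iff.mpr hc).hasSum
  -- the e-indexed pieces
  set G : ℕ → ℕ → ℂ := fun e d => if e ∣ d then (e : ℂ) * ((μ (d / e) : ℤ) : ℂ) / (d : ℂ) ^ c else 0
    with hGdef
  have hG : ∀ e ∈ n.divisors, HasSum (G e) ((e : ℂ) ^ (-(s : ℂ)) * (riemannZeta c)⁻¹) := by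
    intro e he
    have he0 : e ≠ 0 := (Nat.pos_of_mem_divisors he).ne'
    have he' : (e : ℂ) ≠ 0 := Nat.cast_ne_zero.mpr he0
    have hes : (e : ℂ) ^ (s : ℂ) ≠ 0 := by
      simp only [ne_eq, Complex.cpow_eq_zero_iff, not_and_or, not_not]
      exact Or.inl he'
    have hinj : Function.Injective (fun m : ℕ => e * m) :=
      fun a b h => Nat.eq_of_mul_eq_mul_left (Nat.pos_of_ne_zero he0) h
    rw [← Function.Injective.hasSum_iff hinj ?_]
    · have hfun : (G e ∘ fun m : ℕ => e * m)
          = fun m => (e : ℂ) ^ (-(s : ℂ)) * LSeries.term (fun k => ((μ k : ℤ) : ℂ)) c m := by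
        funext m
        rcases eq_or_ne m 0 with rfl | hm
        · simp [hGdef, LSeries.term]
        · have hm' : (m : ℂ) ≠ 0 := Nat.cast_ne_zero.mpr hm
          have hdvd : e ∣ e * m := Dvd.intro m rfl
          have hdiv : (e * m) / e = m := Nat.mul_div_cancel_left m (Nat.pos_of_ne_zero he0)
          have hsplit : ((e * m : ℕ) : ℂ) ^ c = (e : ℂ) ^ c * (m : ℂ) ^ c := by
            have h3 : ((e * m : ℕ) : ℂ) = ((e : ℝ) : ℂ) * ((m : ℝ) : ℂ) := by push_cast; ring
            rw [h3, Complex.mul_cpow_ofReal_nonneg (Nat.cast_nonneg e) (Nat.cast_nonneg m)]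
            norm_num
          have hec : (e : ℂ) ^ c = (e : ℂ) * (e : ℂ) ^ (s : ℂ) := by
            rw [hcdef, Complex.cpow_add _ _ he', Complex.cpow_one]
          have hmc : (m : ℂ) ^ c ≠ 0 := by
            simp only [ne_eq, Complex.cpow_eq_zero_iff, not_and_or, not_not]
            exact Or.inl hm'
          simp only [Function.comp_apply, hGdef, if_pos hdvd, hdiv,
            LSeries.term_of_ne_zero hm, hsplit, hec, Complex.cpow_neg]
          field_simp
      rw [hfun]
      exact hμsum.mul_left _
    · intro d hd
      simp only [Set.mem_range, not_exists] at hd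
      have : ¬ e ∣ d := fun ⟨k, hk⟩ => hd k hk.symm
      simp [hGdef, this]
  have hsum2 := hasSum_sum hG
  -- identify the summand
  have hFeq : ∀ d : ℕ, (∑ e ∈ n.divisors, G e d) = ramanujanSum d n / (d : ℂ) ^ c := by
    intro d
    rcases eq_or_ne d 0 with rfl | hd0
    · simp [hGdef, ramanujanSum]
    · rw [aux_ramanujanSum_eq d n hd0]
      have hflip : ∑ e ∈ d.divisors, ((μ e : ℤ) : ℂ) * (if (d / e) ∣ n then ((d / e : ℕ) : ℂ) else 0)
          = ∑ e ∈ d.divisors, ((μ (d / e) : ℤ) : ℂ) * (if e ∣ n then (e : ℂ) else 0) := by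
        rw [← Nat.sum_div_divisors d (fun x => ((μ (d / x) : ℤ) : ℂ) * (if x ∣ n then (x : ℂ) else 0))]
        apply Finset.sum_congr rfl
        intro e he
        obtain ⟨hedvd, _⟩ := Nat.mem_divisors.mp he
        rw [Nat.div_div_self hedvd hd0]
      rw [hflip, Finset.sum_div]
      have hsets : n.divisors.filter (· ∣ d) = d.divisors.filter (· ∣ n) := by
        ext x
        simp only [Finset.mem_filter, Nat.mem_divisors]
        tauto
      calc ∑ e ∈ n.divisors, G e d
          = ∑ e ∈ n.divisors.filter (· ∣ d), (e : ℂ) * ((μ (d / e) : ℤ) : ℂ) / (d : ℂ) ^ c := by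
            rw [Finset.sum_filter]
        _ = ∑ e ∈ d.divisors.filter (· ∣ n), (e : ℂ) * ((μ (d / e) : ℤ) : ℂ) / (d : ℂ) ^ c := by
            rw [hsets]
        _ = ∑ e ∈ d.divisors, (if e ∣ n then (e : ℂ) * ((μ (d / e) : ℤ) : ℂ) / (d : ℂ) ^ c else 0) := by
            rw [Finset.sum_filter]
        _ = ∑ e ∈ d.divisors, ((μ (d / e) : ℤ) : ℂ) * (if e ∣ n then (e : ℂ) else 0) / (d : ℂ) ^ c := by
            apply Finset.sum_congr rfl
            intro x _
            split
            · ring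
            · simp
  rw [funext hFeq] at hsum2
  -- shift the index
  have h0 : ramanujanSum 0 n / (0 : ℂ) ^ c = 0 := by simp [ramanujanSum]
  have hshift : HasSum (fun d : ℕ => ramanujanSum (d + 1) n / ((d + 1 : ℕ) : ℂ) ^ c)
      (∑ e ∈ n.divisors, (e : ℂ) ^ (-(s : ℂ)) * (riemannZeta c)⁻¹) := by
    refine (hasSum_nat_add_iff (f := fun d : ℕ => ramanujanSum d n / (d : ℂ) ^ c) 1).mpr ?_
    simpa [h0] using hsum2
  have hfinal : (∑ e ∈ n.divisors, (e : ℂ) ^ (-(s : ℂ)) * (riemannZeta c)⁻¹)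
      = (∑ e ∈ n.divisors, (e : ℂ) ^ (-(s : ℂ))) / riemannZeta c := by
    rw [← Finset.sum_mul, div_eq_mul_inv]
  rw [hfinal] at hshift
  simpa only [Nat.cast_add, Nat.cast_one] using hshift
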